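/- Let g be holomorphic and bounded on Π₊. If the operator I_g f(z) = ∫_{z₀}^{z} f'(ζ) g(ζ) dζ from H²(Π₊) to B_∞(Π₊) is compact, then lim_{r→0} sup_{Im z < r} |g(z)|/(Im z)^{1/2} = 0. -/

import Mathlib

open Complex MeasureTheory Filter

noncomputable section

/-- The upper half-plane. -/
def UH : Set ℂ := {z : ℂ | 0 < z.im}

/-- The integral means on horizontal lines. -/
def hardySq (f : ℂ → ℂ) (y : ℝ) : ℝ := ∫ x : ℝ, ‖f (x + y * Complex.I)‖ ^ 2

/-- Membership in the Hardy space H²(Π₊). -/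
def MemH2 (f : ℂ → ℂ) : Prop :=
  DifferentiableOn ℂ f UH ∧ BddAbove (Set.range fun y : Set.Ioi (0:ℝ) => hardySq f y)

/-- The H² norm. -/
def hardyNorm (f : ℂ → ℂ) : ℝ := Real.sqrt (⨆ y : Set.Ioi (0:ℝ), hardySq f y)

/-- The Bloch seminorm B(f). -/
def blochSemi (f : ℂ → ℂ) : ℝ := ⨆ z : UH, (z : ℂ).im * ‖deriv f (z : ℂ)‖

/-- The Bloch norm ‖f‖ = |f(i)| + B(f). -/
def blochNorm (f : ℂ → ℂ) : ℝ := ‖f Complex.I‖ + blochSemi f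

/-- J_g f(z) = ∫_{z₀}^z f ζ * g' ζ dζ, along the segment (Π₊ is convex). -/
def Jg (g f : ℂ → ℂ) (z₀ z : ℂ) : ℂ :=
  ∫ t in (0:ℝ)..(1:ℝ), f (z₀ + t • (z - z₀)) * deriv g (z₀ + t • (z - z₀)) * (z - z₀)

/-- I_g f(z) = ∫_{z₀}^z f' ζ * g ζ dζ, along the segment. -/
def Ig (g f : ℂ → ℂ) (z₀ z : ℂ) : ℂ :=
  ∫ t in (0:ℝ)..(1:ℝ), deriv f (z₀ + t • (z - z₀)) * g (z₀ + t • (z - z₀)) * (z - z₀)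

/-- The test functions f_w. -/
def fw (w : ℂ) : ℂ → ℂ := fun z =>
  ((w.im ^ ((3:ℝ)/2) : ℝ) : ℂ) / ((Real.sqrt Real.pi : ℂ) * (z - (starRingEnd ℂ) w) ^ 2)

end

open Metric Set

lemma isOpen_UH : IsOpen UH := isOpen_lt continuous_const Complex.continuous_im
lemma convex_UH : Convex ℝ UH := convex_halfSpace_im_gt 0

lemma primitive_hasDerivAt {h : ℂ → ℂ} (hh : DifferentiableOn ℂ h UH)
    {z₀ z : ℂ} (hz₀ : z₀ ∈ UH) (hz : z ∈ UH) :
    HasDerivAt (fun w => ∫ t in (0:ℝ)..1, h (z₀ + t • (w - z₀)) * (w - z₀)) (h z) z := by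
  have hsmul : ∀ (t : ℝ) (w : ℂ), z₀ + t • (w - z₀) = z₀ + (t:ℂ) * (w - z₀) := by
    intro t w; rw [Complex.real_smul]
  obtain ⟨δ, δpos, hδ⟩ := Metric.nhds_basis_closedBall.mem_iff.mp (isOpen_UH.mem_nhds hz)
  set S : Set ℂ := (fun p : ℝ × ℂ => z₀ + p.1 • (p.2 - z₀)) '' (Icc (0:ℝ) 1 ×ˢ closedBall z δ)
    with hS
  have hmem : ∀ t ∈ Icc (0:ℝ) 1, ∀ w ∈ closedBall z δ, z₀ + (t:ℂ) * (w - z₀) ∈ S := by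
    intro t ht w hw
    rw [← hsmul]; exact ⟨(t, w), ⟨ht, hw⟩, rfl⟩
  have hSUH : S ⊆ UH := by
    rintro - ⟨⟨t, w⟩, ⟨ht, hw⟩, rfl⟩
    have h2 : w ∈ UH := hδ hw
    have := convex_UH hz₀ h2 (by linarith [ht.2] : (0:ℝ) ≤ 1 - t) ht.1 (by ring)
    convert this using 1
    simp only [smul_sub, smul_eq_mul]
    rw [Complex.real_smul, Complex.real_smul, Complex.real_smul]
    push_cast; ring
  have hScomp : IsCompact S :=
    ((isCompact_Icc.prod (isCompact_closedBall _ _)).image (by fun_prop))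
  have hcont : ContinuousOn h S := hh.continuousOn.mono hSUH
  have hanal := hh.analyticOnNhd isOpen_UH
  have h'cont : ContinuousOn (deriv h) UH := hanal.deriv.continuousOn
  obtain ⟨C1, hC1⟩ := hScomp.exists_bound_of_continuousOn hcont
  obtain ⟨C2, hC2⟩ := hScomp.exists_bound_of_continuousOn (h'cont.mono hSUH)
  have hzS : z ∈ S := by
    have := hmem 1 (by norm_num) z (mem_closedBall_self δpos.le)
    simpa using this
  have hC2nn : 0 ≤ C2 := le_trans (norm_nonneg _) (hC2 z hzS)
  set B : ℝ := C2 * (δ + ‖z - z₀‖) + C1 with hB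
  set F' : ℂ → ℝ → ℂ := fun w t =>
    deriv h (z₀ + (t:ℂ) * (w - z₀)) * (t:ℂ) * (w - z₀) + h (z₀ + (t:ℂ) * (w - z₀)) with hF'
  have hIoc : Set.uIoc (0:ℝ) 1 ⊆ Icc (0:ℝ) 1 := by
    rw [Set.uIoc_of_le (by norm_num : (0:ℝ) ≤ 1)]; exact Ioc_subset_Icc_self
  have hcontt : ∀ w ∈ closedBall z δ,
      ContinuousOn (fun t : ℝ => h (z₀ + (t:ℝ) • (w - z₀)) * (w - z₀)) (Icc (0:ℝ) 1) := by
    intro w hw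
    apply ContinuousOn.mul _ continuousOn_const
    apply hcont.comp (Continuous.continuousOn (by fun_prop))
    intro t ht
    show z₀ + (t:ℝ) • (w - z₀) ∈ S
    rw [hsmul]; exact hmem t ht w hw
  have hcontt' : ContinuousOn (F' z) (Icc (0:ℝ) 1) := by
    apply ContinuousOn.add
    · apply ContinuousOn.mul _ continuousOn_const
      apply ContinuousOn.mul _ (Complex.continuous_ofReal.continuousOn)
      apply (h'cont.mono hSUH).comp (Continuous.continuousOn (by fun_prop))
      intro t ht
      exact hmem t ht z (mem_closedBall_self δpos.le)
    · apply hcont.comp (Continuous.continuousOn (by fun_prop))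
      intro t ht
      exact hmem t ht z (mem_closedBall_self δpos.le)
  have key := intervalIntegral.hasDerivAt_integral_of_dominated_loc_of_deriv_le
    (F := fun w t => h (z₀ + (t:ℝ) • (w - z₀)) * (w - z₀)) (F' := F') (x₀ := z)
    (bound := fun _ => B) (a := 0) (b := 1) (μ := volume) (ball_mem_nhds z δpos)
    (by
      filter_upwards [closedBall_mem_nhds z δpos] with x hx
      exact ((hcontt x hx).mono hIoc).aestronglyMeasurable measurableSet_uIoc)
    (((hcontt z (mem_closedBall_self δpos.le)).mono
      (by rw [Set.uIcc_of_le (by norm_num : (0:ℝ) ≤ 1)] : Set.uIcc (0:ℝ) 1 ⊆ Icc (0:ℝ) 1)).intervalIntegrable)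
    ((hcontt'.mono hIoc).aestronglyMeasurable measurableSet_uIoc)
    (by
      apply Eventually.of_forall
      intro t ht x hx
      have ht' : t ∈ Icc (0:ℝ) 1 := hIoc ht
      have hx' : x ∈ closedBall z δ := ball_subset_closedBall hx
      have hmem' := hmem t ht' x hx'
      simp only [hF']
      have h1 : ‖deriv h (z₀ + (t:ℂ) * (x - z₀)) * (t:ℂ) * (x - z₀)‖ ≤ C2 * (δ + ‖z - z₀‖) := by
        rw [norm_mul, norm_mul]
        have e1 : ‖deriv h (z₀ + (t:ℂ) * (x - z₀))‖ ≤ C2 := hC2 _ hmem'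
        have e2 : ‖(t:ℂ)‖ ≤ 1 := by
          rw [Complex.norm_real, Real.norm_eq_abs, _root_.abs_of_nonneg ht'.1]; exact ht'.2
        have e3 : ‖x - z₀‖ ≤ δ + ‖z - z₀‖ := by
          calc ‖x - z₀‖ ≤ ‖x - z‖ + ‖z - z₀‖ := by
                simpa using norm_sub_le_norm_sub_add_norm_sub x z z₀
            _ ≤ δ + ‖z - z₀‖ := by
                have := mem_closedBall_iff_norm.mp hx'
                linarith
        calc ‖deriv h (z₀ + (t:ℂ) * (x - z₀))‖ * ‖(t:ℂ)‖ * ‖x - z₀‖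
            ≤ C2 * 1 * (δ + ‖z - z₀‖) := by
              gcongr
          _ = C2 * (δ + ‖z - z₀‖) := by ring
      calc ‖deriv h (z₀ + (t:ℂ) * (x - z₀)) * (t:ℂ) * (x - z₀) + h (z₀ + (t:ℂ) * (x - z₀))‖
          ≤ ‖deriv h (z₀ + (t:ℂ) * (x - z₀)) * (t:ℂ) * (x - z₀)‖ + ‖h (z₀ + (t:ℂ) * (x - z₀))‖ :=
            norm_add_le _ _
        _ ≤ C2 * (δ + ‖z - z₀‖) + C1 := add_le_add h1 (hC1 _ hmem'))
    intervalIntegrable_const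
    (by
      apply Eventually.of_forall
      intro t ht x hx
      have ht' : t ∈ Icc (0:ℝ) 1 := hIoc ht
      have hx' : x ∈ closedBall z δ := ball_subset_closedBall hx
      have hmem' := hmem t ht' x hx'
      have hu : HasDerivAt (fun w : ℂ => z₀ + (t:ℂ) * (w - z₀)) (t:ℂ) x := by
        simpa using (((hasDerivAt_id x).sub_const z₀).const_mul (t:ℂ)).const_add z₀
      have hda : HasDerivAt h (deriv h (z₀ + (t:ℂ) * (x - z₀))) (z₀ + (t:ℂ) * (x - z₀)) :=
        (hh.differentiableAt (isOpen_UH.mem_nhds (hSUH hmem'))).hasDerivAt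
      have hcomp := (hda.comp x hu).mul ((hasDerivAt_id x).sub_const z₀)
      have : (fun w => h (z₀ + (t:ℝ) • (w - z₀)) * (w - z₀))
          = fun w => ((fun w => h (z₀ + (t:ℂ) * (w - z₀))) w) * ((fun w => w - z₀) w) := by
        funext w; rw [hsmul]
      rw [this]
      refine hcomp.congr_deriv ?_
      simp only [hF', Function.comp, id_eq, mul_one]
      all_goals ring)
  obtain ⟨hint, hder⟩ := key
  -- now compute the integral of F' z
  have hval : (∫ t in (0:ℝ)..1, F' z t) = h z := by
    have hFTC : ∀ t ∈ Set.uIcc (0:ℝ) 1,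
        HasDerivAt (fun s : ℝ => (s:ℂ) * h (z₀ + (s:ℂ) * (z - z₀))) (F' z t) t := by
      intro t ht
      have ht' : t ∈ Icc (0:ℝ) 1 := by rwa [Set.uIcc_of_le (by norm_num : (0:ℝ) ≤ 1)] at ht
      have hmem' := hmem t ht' z (mem_closedBall_self δpos.le)
      have hofr : HasDerivAt (fun s : ℝ => (s:ℂ)) 1 t := Complex.ofRealCLM.hasDerivAt
      have hinner : HasDerivAt (fun w : ℂ => z₀ + w * (z - z₀)) (z - z₀) ((t:ℝ):ℂ) := by
        simpa using ((hasDerivAt_id ((t:ℝ):ℂ)).mul_const (z - z₀)).const_add z₀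
      have hda : HasDerivAt h (deriv h (z₀ + (t:ℂ) * (z - z₀))) (z₀ + (t:ℂ) * (z - z₀)) :=
        (hh.differentiableAt (isOpen_UH.mem_nhds (hSUH hmem'))).hasDerivAt
      have hda' : HasDerivAt h (deriv h (z₀ + (t:ℂ) * (z - z₀)))
          ((fun w : ℂ => z₀ + w * (z - z₀)) ((t:ℝ):ℂ)) := hda
      have hΨ : HasDerivAt (h ∘ fun w : ℂ => z₀ + w * (z - z₀))
          (deriv h (z₀ + (t:ℂ) * (z - z₀)) * (z - z₀)) ((t:ℝ):ℂ) :=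
        HasDerivAt.comp _ hda' hinner
      have hψ : HasDerivAt (fun s : ℝ => h (z₀ + (s:ℂ) * (z - z₀)))
          (deriv h (z₀ + (t:ℂ) * (z - z₀)) * (z - z₀)) t := hΨ.comp_ofReal
      have := hofr.mul hψ
      refine this.congr_deriv ?_
      simp only [hF']; ring
    rw [intervalIntegral.integral_eq_sub_of_hasDerivAt hFTC hint]
    simp
  rw [hval] at hder
  have : (fun w => ∫ t in (0:ℝ)..1, h (z₀ + (t:ℝ) • (w - z₀)) * (w - z₀))
      = fun w => ∫ t in (0:ℝ)..1, h (z₀ + t • (w - z₀)) * (w - z₀) := rfl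
  exact hder

lemma sqrtpi_pos : 0 < Real.sqrt Real.pi := Real.sqrt_pos.mpr Real.pi_pos

lemma sub_conj_ne {w z : ℂ} (hw : 0 < w.im) (hz : 0 < z.im) : z - (starRingEnd ℂ) w ≠ 0 := by
  intro hzero
  have : (z - (starRingEnd ℂ) w).im = z.im + w.im := by
    simp [Complex.sub_im, Complex.conj_im]
  rw [hzero] at this
  simp at this
  linarith

lemma fw_hasDerivAt {w z : ℂ} (hw : 0 < w.im) (hz : 0 < z.im) :
    HasDerivAt (fw w) (-(2 * ((w.im ^ ((3:ℝ)/2) : ℝ) : ℂ)) /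
      ((Real.sqrt Real.pi : ℂ) * (z - (starRingEnd ℂ) w) ^ 3)) z := by
  set a := (starRingEnd ℂ) w
  set c : ℂ := ((w.im ^ ((3:ℝ)/2) : ℝ) : ℂ)
  have hne : z - a ≠ 0 := sub_conj_ne hw hz
  have hπ : (Real.sqrt Real.pi : ℂ) ≠ 0 := by
    simpa using sqrtpi_pos.ne'
  have hu : HasDerivAt (fun z => (Real.sqrt Real.pi : ℂ) * (z - a) ^ 2)
      ((Real.sqrt Real.pi : ℂ) * (2 * (z - a))) z := by
    have := (((hasDerivAt_id z).sub_const a).pow 2).const_mul (Real.sqrt Real.pi : ℂ)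
    refine this.congr_deriv ?_; simp only [id_eq]; ring
  have hune : (Real.sqrt Real.pi : ℂ) * (z - a) ^ 2 ≠ 0 :=
    mul_ne_zero hπ (pow_ne_zero 2 hne)
  have hinv := (hu.inv hune).const_mul c
  have : fw w = fun z => c * ((Real.sqrt Real.pi : ℂ) * (z - a) ^ 2)⁻¹ := by
    funext z; exact div_eq_mul_inv _ _
  rw [this]
  refine hinv.congr_deriv ?_
  field_simp

lemma fw_norm (w : ℂ) (hw : 0 < w.im) (z : ℂ) :
    ‖fw w z‖ = w.im ^ ((3:ℝ)/2) / (Real.sqrt Real.pi * ‖z - (starRingEnd ℂ) w‖ ^ 2) := by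
  rw [fw]
  rw [norm_div, norm_mul, norm_pow]
  congr 1
  · rw [Complex.norm_real, Real.norm_eq_abs, _root_.abs_of_nonneg (Real.rpow_nonneg hw.le _)]
  · congr 1
    rw [Complex.norm_real, Real.norm_eq_abs, _root_.abs_of_nonneg (Real.sqrt_nonneg _)]

lemma im_le_norm_sub_conj (w z : ℂ) : z.im + w.im ≤ ‖z - (starRingEnd ℂ) w‖ := by
  have : (z - (starRingEnd ℂ) w).im = z.im + w.im := by
    simp [Complex.sub_im, Complex.conj_im]
  calc z.im + w.im = (z - (starRingEnd ℂ) w).im := this.symm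
    _ ≤ ‖z - (starRingEnd ℂ) w‖ := Complex.im_le_norm _

lemma norm_sub_conj_sq (w : ℂ) (x y : ℝ) :
    ‖(x : ℂ) + y * Complex.I - (starRingEnd ℂ) w‖ ^ 2 = (x - w.re) ^ 2 + (y + w.im) ^ 2 := by
  rw [Complex.sq_norm, Complex.normSq_apply]
  simp only [Complex.sub_re, Complex.sub_im, Complex.add_re, Complex.add_im, Complex.conj_re,
    Complex.conj_im, Complex.ofReal_re, Complex.ofReal_im, Complex.mul_re, Complex.mul_im,
    Complex.I_re, Complex.I_im]
  ring

lemma hardy_bound (w : ℂ) (hw : 0 < w.im) (y : ℝ) (hy : 0 < y) : hardySq (fw w) y ≤ 1 := by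
  set a₀ := w.re
  set b := y + w.im with hb
  have hbpos : 0 < b := by positivity
  -- the dominating function
  set G : ℝ → ℝ := fun x => w.im ^ (3:ℕ) / (Real.pi * b ^ 2) * ((x - a₀) ^ 2 + b ^ 2)⁻¹ with hG
  have hint0 : Integrable (fun x : ℝ => (1 + x ^ 2)⁻¹) := integrable_inv_one_add_sq
  have hint1 : Integrable (fun x : ℝ => (1 + (x / b) ^ 2)⁻¹) := hint0.comp_div hbpos.ne'
  have hint2 : Integrable (fun x : ℝ => (1 + ((x - a₀) / b) ^ 2)⁻¹) := hint1.comp_sub_right a₀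
  have hrw : ∀ x : ℝ, ((x - a₀) ^ 2 + b ^ 2)⁻¹ = b⁻¹ ^ 2 * (1 + ((x - a₀) / b) ^ 2)⁻¹ := by
    intro x
    field_simp
    ring
  have hint3 : Integrable (fun x : ℝ => ((x - a₀) ^ 2 + b ^ 2)⁻¹) := by
    have := hint2.const_mul (b⁻¹ ^ 2)
    exact this.congr (Eventually.of_forall fun x => (hrw x).symm)
  have hintG : Integrable G := hint3.const_mul _
  have hval3 : (∫ x : ℝ, ((x - a₀) ^ 2 + b ^ 2)⁻¹) = Real.pi / b := by
    have e1 : (∫ x : ℝ, ((x - a₀) ^ 2 + b ^ 2)⁻¹)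
        = ∫ x : ℝ, b⁻¹ ^ 2 * (1 + ((x - a₀) / b) ^ 2)⁻¹ := by
      congr 1; funext x; exact hrw x
    rw [e1, MeasureTheory.integral_const_mul]
    have e2 : (∫ x : ℝ, (1 + ((x - a₀) / b) ^ 2)⁻¹)
        = ∫ x : ℝ, (1 + (x / b) ^ 2)⁻¹ := by
      exact integral_sub_right_eq_self (fun x => (1 + (x / b) ^ 2)⁻¹) a₀
    rw [e2]
    have e3 : (∫ x : ℝ, (1 + (x / b) ^ 2)⁻¹) = |b| • ∫ x : ℝ, (1 + x ^ 2)⁻¹ :=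
      MeasureTheory.Measure.integral_comp_div (fun x => (1 + x ^ 2)⁻¹) b
    rw [e3, integral_univ_inv_one_add_sq, smul_eq_mul, abs_of_pos hbpos]
    field_simp
  have hvalG : (∫ x : ℝ, G x) = w.im ^ (3:ℕ) / b ^ 3 := by
    rw [hG]
    rw [MeasureTheory.integral_const_mul, hval3]
    field_simp
  have hptle : ∀ x : ℝ, ‖fw w ((x:ℂ) + y * Complex.I)‖ ^ 2 ≤ G x := by
    intro x
    have hc2 : (w.im ^ ((3:ℝ)/2)) ^ 2 = w.im ^ (3:ℕ) := by
      rw [← Real.rpow_natCast (w.im ^ ((3:ℝ)/2)) 2, ← Real.rpow_mul hw.le]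
      have : ((3:ℝ)/2) * ((2:ℕ):ℝ) = ((3:ℕ):ℝ) := by norm_num
      rw [this, Real.rpow_natCast]
    rw [fw_norm w hw, div_pow, mul_pow, norm_sub_conj_sq, Real.sq_sqrt Real.pi_pos.le, hc2, hG,
      ← hb]
    set s := (x - a₀) ^ 2 + b ^ 2 with hs
    have hsge : b ^ 2 ≤ s := by nlinarith [sq_nonneg (x - a₀)]
    have hspos : 0 < s := lt_of_lt_of_le (by positivity) hsge
    show w.im ^ (3:ℕ) / (Real.pi * s ^ 2) ≤ w.im ^ (3:ℕ) / (Real.pi * b ^ 2) * s⁻¹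
    have hR : w.im ^ (3:ℕ) / (Real.pi * b ^ 2) * s⁻¹
        = w.im ^ (3:ℕ) / (Real.pi * (b ^ 2 * s)) := by
      field_simp
    rw [hR]
    apply div_le_div_of_nonneg_left (by positivity) (by positivity)
    have h1 : b ^ 2 * s ≤ s * s := mul_le_mul_of_nonneg_right hsge hspos.le
    have h2 : s * s = s ^ 2 := (sq s).symm
    nlinarith [Real.pi_pos]
  have : hardySq (fw w) y ≤ ∫ x : ℝ, G x := by
    apply MeasureTheory.integral_mono_of_nonneg
    · exact Eventually.of_forall fun x => by positivity
    · exact hintG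
    · exact Eventually.of_forall hptle
  refine le_trans this ?_
  rw [hvalG]
  rw [div_le_one (by positivity)]
  calc w.im ^ (3:ℕ) ≤ b ^ (3:ℕ) := by
        apply pow_le_pow_left₀ hw.le
        linarith
    _ = b ^ 3 := rfl


lemma fw_deriv_norm {w z : ℂ} (hw : 0 < w.im) (hz : 0 < z.im) :
    ‖deriv (fw w) z‖ = 2 * w.im ^ ((3:ℝ)/2) /
      (Real.sqrt Real.pi * ‖z - (starRingEnd ℂ) w‖ ^ 3) := by
  rw [(fw_hasDerivAt hw hz).deriv]
  rw [norm_div, norm_neg, norm_mul, norm_mul, norm_pow]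
  congr 2
  · norm_num
  · rw [Complex.norm_real, Real.norm_eq_abs, _root_.abs_of_nonneg (Real.rpow_nonneg hw.le _)]
  · rw [Complex.norm_real, Real.norm_eq_abs, _root_.abs_of_nonneg (Real.sqrt_nonneg _)]

lemma fw_diffOn {w : ℂ} (hw : 0 < w.im) : DifferentiableOn ℂ (fw w) UH :=
  fun z hz => ((fw_hasDerivAt hw hz).differentiableAt).differentiableWithinAt

lemma Ig_hasDerivAt (g f : ℂ → ℂ) (hg : DifferentiableOn ℂ g UH)
    (hf' : DifferentiableOn ℂ (deriv f) UH) {z₀ z : ℂ} (hz₀ : z₀ ∈ UH) (hz : z ∈ UH) :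
    HasDerivAt (fun z => Ig g f z₀ z) (deriv f z * g z) z :=
  primitive_hasDerivAt (h := fun ζ => deriv f ζ * g ζ) (hf'.mul hg) hz₀ hz

theorem stmt11 (g : ℂ → ℂ) (hg : DifferentiableOn ℂ g UH)
    (hgb : ∃ M : ℝ, ∀ z ∈ UH, ‖g z‖ ≤ M)
    (z₀ : ℂ) (hz₀ : z₀ ∈ UH)
    (hcpt : ∀ F : ℕ → ℂ → ℂ, (∀ n, MemH2 (F n)) →
      (∃ M : ℝ, ∀ n, hardyNorm (F n) ≤ M) →
      (∀ K : Set ℂ, K ⊆ UH → IsCompact K → TendstoUniformlyOn F 0 atTop K) →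
      Tendsto (fun n => blochNorm (fun z => Ig g (F n) z₀ z)) atTop (nhds 0)) :
    ∀ ε > 0, ∃ r > 0, ∀ z ∈ UH, z.im < r →
      ‖g z‖ / z.im ^ ((1:ℝ)/2) < ε := by
  intro ε hε
  by_contra hcon
  push_neg at hcon
  have hstep : ∀ n : ℕ, ∃ z ∈ UH, z.im < 1/(n+1) ∧ ε ≤ ‖g z‖ / z.im ^ ((1:ℝ)/2) := by
    intro n
    obtain ⟨z, hz1, hz2, hz3⟩ := hcon (1/(n+1)) (by positivity)
    exact ⟨z, hz1, hz2, hz3⟩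
  choose w hwUH hwim hwlow using hstep
  obtain ⟨M, hM⟩ := hgb
  set M0 : ℝ := max M 0 with hM0
  have hM0nn : 0 ≤ M0 := le_max_right _ _
  have hgM0 : ∀ z ∈ UH, ‖g z‖ ≤ M0 := fun z hz => le_trans (hM z hz) (le_max_left _ _)
  set F : ℕ → ℂ → ℂ := fun n => fw (w n) with hF
  have hwpos : ∀ n, 0 < (w n).im := fun n => hwUH n
  have hπ : 0 < Real.sqrt Real.pi := sqrtpi_pos
  -- H² membership
  have hF1 : ∀ n, MemH2 (F n) := by
    intro n
    refine ⟨fw_diffOn (hwpos n), ⟨1, ?_⟩⟩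
    rintro x ⟨y, rfl⟩
    exact hardy_bound (w n) (hwpos n) y y.2
  -- Hardy norm bound
  have hF2 : ∀ n, hardyNorm (F n) ≤ 1 := by
    intro n
    rw [hardyNorm]
    have : (⨆ y : Set.Ioi (0:ℝ), hardySq (F n) y) ≤ 1 := by
      have hne : Nonempty (Set.Ioi (0:ℝ)) := ⟨⟨1, by norm_num⟩⟩
      exact ciSup_le fun y => hardy_bound (w n) (hwpos n) y y.2
    calc Real.sqrt (⨆ y : Set.Ioi (0:ℝ), hardySq (F n) y) ≤ Real.sqrt 1 :=
          Real.sqrt_le_sqrt this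
      _ = 1 := Real.sqrt_one
  -- uniform convergence on compacts
  have him : Tendsto (fun n => (w n).im) atTop (nhds 0) := by
    apply squeeze_zero (fun n => (hwpos n).le) (fun n => (hwim n).le)
    exact tendsto_one_div_add_atTop_nhds_zero_nat
  have hc0 : Tendsto (fun n => ((w n).im) ^ ((3:ℝ)/2)) atTop (nhds 0) := by
    have := him.rpow_const (p := (3:ℝ)/2) (Or.inr (by norm_num))
    rwa [Real.zero_rpow (by norm_num)] at this
  have hF3 : ∀ K : Set ℂ, K ⊆ UH → IsCompact K → TendstoUniformlyOn F 0 atTop K := by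
    intro K hKU hKc
    rcases K.eq_empty_or_nonempty with rfl | hne
    · exact tendstoUniformlyOn_empty
    obtain ⟨zm, hzmK, hmin⟩ := hKc.exists_isMinOn hne Complex.continuous_im.continuousOn
    set δ : ℝ := zm.im with hδ
    have hδpos : 0 < δ := hKU hzmK
    rw [Metric.tendstoUniformlyOn_iff]
    intro η hη
    have hev := hc0.eventually (gt_mem_nhds (show (0:ℝ) < η * (Real.sqrt Real.pi * δ ^ 2) by positivity))
    filter_upwards [hev] with n hn z hzK
    have hzU : z ∈ UH := hKU hzK
    have hzim : δ ≤ z.im := hmin hzK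
    have hdist : dist ((0 : ℂ → ℂ) z) (F n z) = ‖F n z‖ := by
      simp [dist_eq_norm]
    rw [hdist, hF]
    rw [fw_norm (w n) (hwpos n) z]
    have hNle : δ ≤ ‖z - (starRingEnd ℂ) (w n)‖ := by
      have := im_le_norm_sub_conj (w n) z
      have := hwpos n
      have hzi : (0:ℝ) < z.im := hzU
      linarith [im_le_norm_sub_conj (w n) z]
    have hNpos : 0 < ‖z - (starRingEnd ℂ) (w n)‖ := lt_of_lt_of_le hδpos hNle
    calc (w n).im ^ ((3:ℝ)/2) / (Real.sqrt Real.pi * ‖z - (starRingEnd ℂ) (w n)‖ ^ 2)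
        ≤ (w n).im ^ ((3:ℝ)/2) / (Real.sqrt Real.pi * δ ^ 2) := by
          apply div_le_div_of_nonneg_left (Real.rpow_nonneg (hwpos n).le _) (by positivity)
          have : δ ^ 2 ≤ ‖z - (starRingEnd ℂ) (w n)‖ ^ 2 := by
            apply pow_le_pow_left₀ hδpos.le hNle
          nlinarith [hπ]
      _ < η := by
          rw [div_lt_iff₀ (by positivity)]
          linarith [hn]
  have hten := hcpt F hF1 ⟨1, hF2⟩ hF3
  -- lower bound for the Bloch norms
  have hlow : ∀ n, ε / (4 * Real.sqrt Real.pi) ≤ blochNorm (fun z => Ig g (F n) z₀ z) := by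
    intro n
    set f : ℂ → ℂ := fw (w n) with hfdef
    set y : ℝ := (w n).im with hy
    have hypos : 0 < y := hwpos n
    set u : ℝ := y ^ ((1:ℝ)/2) with hu
    have hupos : 0 < u := Real.rpow_pos_of_pos hypos _
    have hu2 : u ^ 2 = y := by
      rw [hu, ← Real.rpow_natCast (y ^ ((1:ℝ)/2)) 2, ← Real.rpow_mul hypos.le]
      norm_num
    have hq : ε ≤ ‖g (w n)‖ / u := hwlow n
    have hf' : DifferentiableOn ℂ (deriv f) UH :=
      (((fw_diffOn hypos).analyticOnNhd isOpen_UH).deriv).differentiableOn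
    have hD : ∀ z ∈ UH, HasDerivAt (fun z => Ig g f z₀ z) (deriv f z * g z) z :=
      fun z hz => Ig_hasDerivAt g f hg hf' hz₀ hz
    have hderiv_eq : ∀ z ∈ UH, deriv (fun z => Ig g f z₀ z) z = deriv f z * g z :=
      fun z hz => (hD z hz).deriv
    -- bound for BddAbove
    have hbdd : BddAbove (Set.range fun z : UH =>
        (z : ℂ).im * ‖deriv (fun z => Ig g f z₀ z) (z : ℂ)‖) := by
      refine ⟨2 * y ^ ((3:ℝ)/2) / (Real.sqrt Real.pi * y ^ 2) * M0, ?_⟩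
      rintro x ⟨⟨z, hz⟩, rfl⟩
      simp only
      rw [hderiv_eq z hz, norm_mul, fw_deriv_norm hypos hz, ← mul_assoc, ← hy]
      set N : ℝ := ‖z - (starRingEnd ℂ) (w n)‖ with hN
      have hzim : 0 < z.im := hz
      have hNz : z.im ≤ N := by linarith [im_le_norm_sub_conj (w n) z]
      have hNy : y ≤ N := by linarith [im_le_norm_sub_conj (w n) z]
      have hNpos : 0 < N := lt_of_lt_of_le hypos hNy
      have hgz : ‖g z‖ ≤ M0 := hgM0 z hz
      have hcnn : (0:ℝ) ≤ y ^ ((3:ℝ)/2) := Real.rpow_nonneg hypos.le _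
      calc z.im * (2 * y ^ ((3:ℝ)/2) / (Real.sqrt Real.pi * N ^ 3)) * ‖g z‖
          ≤ N * (2 * y ^ ((3:ℝ)/2) / (Real.sqrt Real.pi * N ^ 3)) * M0 := by
            gcongr
        _ = 2 * y ^ ((3:ℝ)/2) / (Real.sqrt Real.pi * N ^ 2) * M0 := by
            field_simp
        _ ≤ 2 * y ^ ((3:ℝ)/2) / (Real.sqrt Real.pi * y ^ 2) * M0 := by
            gcongr
    have hkey : ε / (4 * Real.sqrt Real.pi) ≤
        (w n).im * ‖deriv (fun z => Ig g f z₀ z) (w n)‖ := by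
      rw [hderiv_eq (w n) (hwUH n), norm_mul, fw_deriv_norm hypos (hwpos n), ← mul_assoc, ← hy]
      have hsc : ‖(w n) - (starRingEnd ℂ) (w n)‖ = 2 * y := by
        rw [Complex.sub_conj]
        rw [norm_mul, Complex.norm_real, Complex.norm_I, Real.norm_eq_abs,
          _root_.abs_of_pos (by positivity), mul_one]
      rw [hsc]
      have hc3 : y ^ ((3:ℝ)/2) = u ^ 3 := by
        rw [show ((3:ℝ)/2) = 1 + 1/2 by norm_num, Real.rpow_add hypos, Real.rpow_one, ← hu,
          ← hu2]
        ring
      have hiden : y * (2 * y ^ ((3:ℝ)/2) / (Real.sqrt Real.pi * (2 * y) ^ 3)) * ‖g (w n)‖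
          = (‖g (w n)‖ / u) / (4 * Real.sqrt Real.pi) := by
        rw [hc3, ← hu2]
        field_simp
        ring
      rw [hiden]
      gcongr
    -- combine
    have hsemi : (w n).im * ‖deriv (fun z => Ig g f z₀ z) (w n)‖ ≤
        blochSemi (fun z => Ig g f z₀ z) := by
      exact le_ciSup hbdd ⟨w n, hwUH n⟩
    have : ε / (4 * Real.sqrt Real.pi) ≤ blochSemi (fun z => Ig g f z₀ z) :=
      le_trans hkey hsemi
    calc ε / (4 * Real.sqrt Real.pi) ≤ blochSemi (fun z => Ig g f z₀ z) := this
      _ ≤ blochNorm (fun z => Ig g f z₀ z) := le_add_of_nonneg_left (norm_nonneg _)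
  have hcontr : ε / (4 * Real.sqrt Real.pi) ≤ 0 := ge_of_tendsto' hten hlow
  have : 0 < ε / (4 * Real.sqrt Real.pi) := by positivity
  linarith
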